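/- Let A and J be N×N complex matrices such that Aᴴ·J + J·A = 0, let p be a polynomial with real coefficients, and suppose that the matrices p(A) and p(−A) are invertible. Then the rational function R = (p(−A))⁻¹ · p(A) belongs to the quadratic Lie group associated with J: Rᴴ · J · R = J. In particular, diagonal Padé approximants r_{m,m}(A) = (p_{m,m}(−A))⁻¹ · p_{m,m}(A) preserve the quadratic Lie group structure. -/
import Mathlib


open Matrix Polynomial

private lemma aeval_comm_of_mul_comm {N : ℕ} (X Y J : Matrix (Fin N) (Fin N) ℂ)
    (h : X * J = J * Y) (p : Polynomial ℝ) :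
    (Polynomial.aeval X p) * J = J * (Polynomial.aeval Y p) := by
  have hpow : ∀ n : ℕ, X ^ n * J = J * Y ^ n := by
    intro n
    induction n with
    | zero => simp
    | succ k ih =>
      rw [pow_succ, pow_succ, mul_assoc, h, ← mul_assoc, ih, mul_assoc]
  induction p using Polynomial.induction_on' with
  | add q r hq hr => simp [add_mul, mul_add, hq, hr]
  | monomial n a =>
    simp only [Polynomial.aeval_monomial]
    rw [mul_assoc, hpow n, ← mul_assoc, Algebra.commutes a J, mul_assoc]

private lemma star_aeval {N : ℕ} (A : Matrix (Fin N) (Fin N) ℂ) (p : Polynomial ℝ) :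
    (Polynomial.aeval A p)ᴴ = Polynomial.aeval Aᴴ p := by
  induction p using Polynomial.induction_on' with
  | add q r hq hr => simp [hq, hr]
  | monomial n a =>
    simp only [Polynomial.aeval_monomial]
    have hsa : ((algebraMap ℝ (Matrix (Fin N) (Fin N) ℂ)) a)ᴴ
        = (algebraMap ℝ (Matrix (Fin N) (Fin N) ℂ)) a := by
      ext i j
      simp only [Matrix.conjTranspose_apply, Algebra.algebraMap_eq_smul_one, Matrix.smul_apply,
        Matrix.one_apply]
      rcases eq_or_ne i j with h | h
      · simp [h]
      · simp [h, Ne.symm h]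
    rw [conjTranspose_mul, conjTranspose_pow, hsa, ← Algebra.commutes a (Aᴴ ^ n)]

/-- If `A` belongs to the quadratic Lie algebra of `J` and `p` is a real polynomial
with `p(A)` and `p(−A)` invertible, then `R = (p(−A))⁻¹ p(A)` belongs to the
quadratic Lie group of `J`: `Rᴴ J R = J`.  In particular diagonal Padé
approximants preserve the quadratic Lie group structure. -/
theorem pade_preserves_quadratic_lie_group (N : ℕ) (A J : Matrix (Fin N) (Fin N) ℂ)
    (hA : Aᴴ * J + J * A = 0) (p : Polynomial ℝ)
    (h₁ : IsUnit (Polynomial.aeval A p))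
    (h₂ : IsUnit (Polynomial.aeval (-A) p)) :
    ((Polynomial.aeval (-A) p)⁻¹ * Polynomial.aeval A p)ᴴ * J *
      ((Polynomial.aeval (-A) p)⁻¹ * Polynomial.aeval A p) = J := by
  set P := Polynomial.aeval A p with hP
  set Q := Polynomial.aeval (-A) p with hQ
  have hAJ : Aᴴ * J = J * (-A) := by
    have := hA
    rw [add_eq_zero_iff_eq_neg] at this
    rw [this, Matrix.mul_neg]
  have hAJ' : (-A)ᴴ * J = J * A := by
    rw [Matrix.conjTranspose_neg, Matrix.neg_mul, hAJ, Matrix.mul_neg, neg_neg]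
  -- Pᴴ J = J Q
  have h3 : Pᴴ * J = J * Q := by
    rw [hP, star_aeval]
    exact aeval_comm_of_mul_comm _ _ _ hAJ p
  -- Qᴴ J = J P
  have h4 : Qᴴ * J = J * P := by
    rw [hQ, star_aeval]
    exact aeval_comm_of_mul_comm _ _ _ hAJ' p
  -- P and Q commute
  have hPQ : P * Q = Q * P := by
    have hQ' : Q = Polynomial.aeval A (p.comp (-Polynomial.X)) := by
      rw [Polynomial.aeval_comp]; simp [hQ]
    rw [hP, hQ', ← _root_.map_mul, ← _root_.map_mul, mul_comm]
  have hPd : IsUnit P.det := (Matrix.isUnit_iff_isUnit_det P).mp h₁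
  have hQd : IsUnit Q.det := (Matrix.isUnit_iff_isUnit_det Q).mp h₂
  have hQHd : IsUnit Qᴴ.det := by
    rw [Matrix.det_conjTranspose]; exact hQd.star
  have hPinv : P * P⁻¹ = 1 := Matrix.mul_nonsing_inv P hPd
  have hPinv' : P⁻¹ * P = 1 := Matrix.nonsing_inv_mul P hPd
  have hQinv : Q * Q⁻¹ = 1 := Matrix.mul_nonsing_inv Q hQd
  have hQHinv : Qᴴ⁻¹ * Qᴴ = 1 := Matrix.nonsing_inv_mul Qᴴ hQHd
  -- (Qᴴ)⁻¹ J = J P⁻¹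
  have h5 : Qᴴ⁻¹ * J = J * P⁻¹ := by
    calc Qᴴ⁻¹ * J = Qᴴ⁻¹ * (J * P) * P⁻¹ := by
          rw [mul_assoc, mul_assoc, hPinv, mul_one]
      _ = Qᴴ⁻¹ * (Qᴴ * J) * P⁻¹ := by rw [h4]
      _ = J * P⁻¹ := by rw [← mul_assoc, hQHinv, one_mul]
  -- Q P⁻¹ = P⁻¹ Q
  have h6 : Q * P⁻¹ = P⁻¹ * Q := by
    calc Q * P⁻¹ = P⁻¹ * (P * Q) * P⁻¹ := by rw [← mul_assoc, hPinv', one_mul]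
      _ = P⁻¹ * (Q * P) * P⁻¹ := by rw [hPQ]
      _ = P⁻¹ * Q := by rw [mul_assoc, mul_assoc, hPinv, mul_one]
  rw [conjTranspose_mul, Matrix.conjTranspose_nonsing_inv]
  calc Pᴴ * Qᴴ⁻¹ * J * (Q⁻¹ * P)
      = Pᴴ * (Qᴴ⁻¹ * J) * (Q⁻¹ * P) := by rw [mul_assoc Pᴴ]
    _ = Pᴴ * (J * P⁻¹) * (Q⁻¹ * P) := by rw [h5]
    _ = (Pᴴ * J) * (P⁻¹ * (Q⁻¹ * P)) := by rw [mul_assoc, mul_assoc, mul_assoc]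
    _ = (J * Q) * (P⁻¹ * (Q⁻¹ * P)) := by rw [h3]
    _ = J * (Q * P⁻¹ * Q⁻¹ * P) := by rw [mul_assoc, mul_assoc, mul_assoc]
    _ = J * (P⁻¹ * Q * Q⁻¹ * P) := by rw [h6]
    _ = J := by rw [mul_assoc P⁻¹ Q, hQinv, mul_one, hPinv', mul_one]
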